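/- Let p be an odd prime, K a field of characteristic p with prime field K', N = (p+1)/2, and let I ⊆ K[x₀,…,x_N] be the ideal of all K'-points of P^N except q = [1:0:⋯:0]. Then the form G = x₀(x₀^{p-1} - x_N^{p-1})(N x₀^{p-1} + Σ_{i=1}^{N-1} x_i^{p-1}) · Q_{p-1}(x₀^{p-1},…,x_N^{p-1}) has degree p², does not vanish at q, and lies in the symbolic power I^{((p+3)/2)}. -/

import Mathlib

open MvPolynomial Finset

namespace Stmt12Aux

variable {R : Type*} [CommRing R]

/-- Complete homogeneous sum of degree `s` of a list of ring elements. -/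
def HL : ℕ → List R → R
  | s, [] => if s = 0 then 1 else 0
  | s, x :: l => ∑ j ∈ Finset.range (s + 1), x ^ j * HL (s - j) l

@[simp] lemma HL_nil (s : ℕ) : HL s ([] : List R) = if s = 0 then 1 else 0 := by rw [HL]

lemma HL_cons (s : ℕ) (x : R) (l : List R) :
    HL s (x :: l) = ∑ j ∈ Finset.range (s + 1), x ^ j * HL (s - j) l := by rw [HL]

lemma HL_zero (l : List R) : HL 0 l = 1 := by
  induction l with
  | nil => simp
  | cons x l ih => rw [HL_cons]; simp [ih]

lemma HL_succ_cons (s : ℕ) (x : R) (l : List R) :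
    HL (s + 1) (x :: l) = x * HL s (x :: l) + HL (s + 1) l := by
  rw [HL_cons (s+1) x l, Finset.sum_range_succ', HL_cons s x l, Finset.mul_sum]
  simp only [Nat.add_sub_add_right, pow_zero, one_mul, Nat.sub_zero]
  congr 1
  refine Finset.sum_congr rfl fun j _ => ?_
  rw [pow_succ]
  ring

lemma HL_sub (t : R) : ∀ (s : ℕ) (x : R) (l : List R),
    HL (s + 1) (x :: l) = HL (s + 1) (t :: l) + (x - t) * HL s (x :: t :: l)
  | 0, x, l => by
    rw [HL_succ_cons, HL_succ_cons 0 t l]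
    simp only [HL_zero]
    ring
  | (s+1), x, l => by
    have h1 := HL_succ_cons (s + 1) x l
    have h2 := HL_succ_cons (s + 1) t l
    have h3 := HL_sub t s x l
    have h4 := HL_succ_cons s x (t :: l)
    rw [h1, h2, h4, h3]
    ring

lemma HL_aux (s : ℕ) (x y : R) (l : List R) :
    HL s (x :: y :: l) =
      ∑ j ∈ Finset.range (s + 1), ∑ i ∈ Finset.range (s + 1),
        if j + i ≤ s then x ^ j * (y ^ i * HL (s - j - i) l) else 0 := by
  rw [HL_cons]
  refine Finset.sum_congr rfl fun j hj => ?_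
  rw [Finset.mem_range] at hj
  rw [HL_cons, Finset.mul_sum]
  rw [← Finset.sum_subset (Finset.range_subset_range.2 (by omega : s - j + 1 ≤ s + 1))]
  · refine Finset.sum_congr rfl fun i hi => ?_
    rw [Finset.mem_range] at hi
    rw [if_pos (by omega)]
  · intro i hi hni
    rw [Finset.mem_range] at hi
    simp only [Finset.mem_range, not_lt] at hni
    exact if_neg (by omega)

lemma HL_swap (s : ℕ) (x y : R) (l : List R) : HL s (x :: y :: l) = HL s (y :: x :: l) := by
  rw [HL_aux, HL_aux, Finset.sum_comm]
  refine Finset.sum_congr rfl fun i _ => Finset.sum_congr rfl fun j _ => ?_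
  by_cases h : i + j ≤ s
  · rw [if_pos (by omega), if_pos h, (by omega : s - j - i = s - i - j)]
    ring
  · rw [if_neg (by omega), if_neg h]

lemma HL_perm {l₁ l₂ : List R} (h : l₁.Perm l₂) : ∀ s, HL s l₁ = HL s l₂ := by
  induction h with
  | nil => intro s; rfl
  | cons x h ih =>
      intro s
      rw [HL_cons, HL_cons]
      exact Finset.sum_congr rfl fun j _ => by rw [ih]
  | swap x y l => intro s; exact HL_swap s y x l
  | trans h1 h2 ih1 ih2 => intro s; rw [ih1, ih2]

lemma HL_replicate (t : R) : ∀ (r s : ℕ),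
    HL s (List.replicate (r + 1) t) = ((s + r).choose r : R) * t ^ s := by
  intro r
  induction r with
  | zero =>
      intro s
      rw [List.replicate_one, HL_cons]
      rw [Finset.sum_eq_single s]
      · simp
      · intro j hj hjs
        rw [Finset.mem_range] at hj
        rw [HL_nil, if_neg (by omega), mul_zero]
      · intro h
        exact absurd (Finset.self_mem_range_succ s) h
  | succ r ih =>
      intro s
      rw [List.replicate_succ, HL_cons]
      have h1 : ∀ j ∈ Finset.range (s + 1),
          t ^ j * HL (s - j) (List.replicate (r + 1) t)
            = (((s - j) + r).choose r : R) * t ^ s := by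
        intro j hj
        rw [Finset.mem_range] at hj
        rw [ih (s - j), ← mul_assoc, mul_comm (t ^ j), mul_assoc, ← pow_add,
          (by omega : j + (s - j) = s)]
      rw [Finset.sum_congr rfl h1, ← Finset.sum_mul, ← Nat.cast_sum]
      congr 2
      rw [← Finset.sum_range_reflect (fun j => ((s - j) + r).choose r) (s + 1)]
      have h3 := Nat.sum_Icc_choose (s + r) r
      rw [← Finset.Ico_add_one_right_eq_Icc, Finset.sum_Ico_eq_sum_range] at h3
      rw [(by omega : s + r + 1 - r = s + 1)] at h3
      rw [(by omega : s + (r + 1) = s + r + 1), ← h3]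
      refine Finset.sum_congr rfl fun j hj => ?_
      rw [Finset.mem_range] at hj
      congr 1
      omega

/-- The auxiliary ideal in the Taylor-type expansion of `HL`. -/
def Tid (I : Ideal R) (t : R) (n s : ℕ) : Ideal R :=
  Ideal.span {u | ∃ j ≤ s, ∃ v ∈ I ^ j, u = ((n.choose (n - s + j) : R)) * t ^ (s - j) * v}

lemma mem_Tid (I : Ideal R) (t : R) (n s j : ℕ) (hj : j ≤ s) {v : R} (hv : v ∈ I ^ j) :
    ((n.choose (n - s + j) : R)) * t ^ (s - j) * v ∈ Tid I t n s :=
  Ideal.subset_span ⟨j, hj, v, hv, rfl⟩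

lemma Tid_shift (I : Ideal R) (t : R) (n s : ℕ) (hs : s + 1 ≤ n) {y z : R}
    (hy : y ∈ I) (hz : z ∈ Tid I t n s) : y * z ∈ Tid I t n (s + 1) := by
  induction hz using Submodule.span_induction with
  | mem u hu =>
      obtain ⟨j, hj, v, hv, rfl⟩ := hu
      have h1 : y * ((n.choose (n - s + j) : R) * t ^ (s - j) * v)
          = (n.choose (n - (s+1) + (j+1)) : R) * t ^ ((s+1) - (j+1)) * (v * y) := by
        rw [(by omega : n - (s+1) + (j+1) = n - s + j), (by omega : (s+1) - (j+1) = s - j)]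
        ring
      rw [h1]
      exact mem_Tid I t n (s+1) (j+1) (by omega) ((pow_succ I j) ▸ Ideal.mul_mem_mul hv hy)
  | zero => rw [mul_zero]; exact zero_mem _
  | add a b _ _ ha hb => rw [mul_add]; exact add_mem ha hb
  | smul a b _ hb =>
      rw [smul_eq_mul, mul_comm a b, ← mul_assoc]
      exact Ideal.mul_mem_right _ _ hb

lemma mainA (I : Ideal R) (t : R) (n : ℕ) :
    ∀ s, s ≤ n → ∀ l : List R, l.length + s = n + 1 → (∀ x ∈ l, x - t ∈ I) →
      HL s l ∈ Tid I t n s := by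
  intro s
  induction s using Nat.strong_induction_on with
  | _ s IH =>
  intro hsn l hlen hmem
  -- inner claim with replicate padding
  suffices h : ∀ l₂ : List R, (∀ x ∈ l₂, x - t ∈ I) → ∀ b : ℕ,
      l₂.length + b + s = n + 1 → HL s (l₂ ++ List.replicate b t) ∈ Tid I t n s by
    have := h l hmem 0 (by simpa using hlen)
    simpa using this
  intro l₂
  induction l₂ with
  | nil =>
      intro _ b hb
      simp only [List.length_nil, List.nil_append] at hb ⊢
      obtain ⟨b', rfl⟩ : ∃ b', b = b' + 1 := ⟨b - 1, by omega⟩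
      rw [HL_replicate]
      have hb' : b' = n - s := by omega
      have h1 : ((s + b').choose b' : R) * t ^ s
          = (n.choose (n - s + 0) : R) * t ^ (s - 0) * 1 := by
        rw [hb', (by omega : s + (n - s) = n), (by omega : n - s + 0 = n - s), mul_one,
          Nat.sub_zero]
      rw [h1]
      exact mem_Tid I t n s 0 (Nat.zero_le _) (by simp [Ideal.one_eq_top])
  | cons x l₂ ihl =>
      intro hmem2 b hb
      rcases Nat.eq_zero_or_pos s with rfl | hspos
      · rw [HL_zero]
        have h1 : (1 : R) = (n.choose (n - 0 + 0) : R) * t ^ (0 - 0) * 1 := by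
          simp [(by omega : n - 0 + 0 = n)]
        rw [h1]
        exact mem_Tid I t n 0 0 le_rfl (by simp [Ideal.one_eq_top])
      obtain ⟨s', rfl⟩ : ∃ s', s = s' + 1 := ⟨s - 1, by omega⟩
      rw [List.cons_append, HL_sub t s' x (l₂ ++ List.replicate b t)]
      refine add_mem ?_ ?_
      · have hp2 : (t :: (l₂ ++ List.replicate b t)).Perm (l₂ ++ List.replicate (b + 1) t) := by
          rw [List.replicate_succ]
          exact (List.perm_middle (a := t) (l₁ := l₂) (l₂ := List.replicate b t)).symm
        rw [HL_perm hp2]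
        refine ihl (fun u hu => hmem2 u (List.mem_cons_of_mem x hu)) (b + 1) ?_
        simp only [List.length_cons] at hb
        omega
      · refine Tid_shift I t n s' (by omega) (hmem2 x List.mem_cons_self) ?_
        refine IH s' (by omega) (by omega) _ ?_ ?_
        · simp only [List.length_cons, List.length_append, List.length_replicate] at hb ⊢
          omega
        · intro u hu
          rcases List.mem_cons.1 hu with rfl | hu
          · exact hmem2 u List.mem_cons_self
          rcases List.mem_cons.1 hu with rfl | hu
          · simpa using zero_mem I
          rcases List.mem_append.1 hu with hu | hu
          · exact hmem2 u (List.mem_cons_of_mem x hu)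
          · rw [List.eq_of_mem_replicate hu]
            simpa using zero_mem I

lemma HK {p : ℕ} (hp : p.Prime) [CharP R p] (I : Ideal R) (t : R) (l : List R)
    (hk2 : 2 ≤ l.length) (hkp : l.length ≤ p) (h : ∀ x ∈ l, x - t ∈ I) :
    HL (p - 1) l ∈ I ^ (p - l.length + 1) := by
  set k := l.length with hk
  have hp2 := hp.two_le
  have h1 : HL (p - 1) l ∈ Tid I t (p + k - 2) (p - 1) :=
    mainA I t (p + k - 2) (p - 1) (by omega) l (by omega) h
  refine Ideal.span_le.2 ?_ h1
  rintro u ⟨j, hj, v, hv, rfl⟩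
  by_cases hjk : j ≤ p - k
  · have hdvd : p ∣ (p + k - 2).choose (p + k - 2 - (p - 1) + j) := by
      refine hp.dvd_choose (by omega) (by omega) (by omega)
    have hzero : (((p + k - 2).choose (p + k - 2 - (p - 1) + j) : R)) = 0 :=
      (CharP.cast_eq_zero_iff R p _).2 hdvd
    rw [hzero, zero_mul, zero_mul]
    exact zero_mem _
  · have hle : I ^ j ≤ I ^ (p - k + 1) := Ideal.pow_le_pow_right (by omega)
    exact Ideal.mul_mem_left _ _ (hle hv)

lemma HK2 {p : ℕ} (hp : p.Prime) [CharP R p] (I J : Ideal R) (t : R) (l₁ l₂ : List R)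
    (h₁ : ∀ x ∈ l₁, x - t ∈ I) (h₂ : ∀ x ∈ l₂, x ∈ J)
    (hk2 : 2 ≤ l₁.length) (hkp : l₁.length ≤ p) :
    HL (p - 1) (l₁ ++ l₂) ∈ I ^ (p - l₁.length + 1) ⊔ J := by
  induction l₂ with
  | nil =>
      rw [List.append_nil]
      exact Ideal.mem_sup_left (HK hp I t l₁ hk2 hkp h₁)
  | cons x l₂ ih =>
      have hperm : (l₁ ++ x :: l₂).Perm (x :: (l₁ ++ l₂)) := List.perm_middle
      rw [HL_perm hperm]
      obtain ⟨s', hs'⟩ : ∃ s', p - 1 = s' + 1 := ⟨p - 2, by have := hp.two_le; omega⟩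
      rw [hs', HL_cons, Finset.sum_range_succ']
      refine add_mem ?_ ?_
      · refine Ideal.sum_mem _ fun j _ => ?_
        have hx : x ∈ J := h₂ x List.mem_cons_self
        refine Ideal.mem_sup_right ?_
        rw [pow_succ]
        exact Ideal.mul_mem_right _ _ (Ideal.mul_mem_left _ _ hx)
      · rw [pow_zero, one_mul, Nat.sub_zero, ← hs']
        exact ih fun u hu => h₂ u (List.mem_cons_of_mem x hu)

lemma bridge {ι : Type*} [DecidableEq ι] (s : Finset ι) (v : ι → R) :
    ∀ n : ℕ, ∑ g ∈ s.piAntidiag n, ∏ i ∈ s, v i ^ g i = HL n (s.toList.map v) := by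
  induction s using Finset.cons_induction with
  | empty =>
      intro n
      rw [Finset.piAntidiag_empty]
      rcases eq_or_ne n 0 with rfl | hn
      · simp
      · simp [hn, HL_nil]
  | cons i s hi ih =>
      intro n
      rw [Finset.piAntidiag_cons hi n, Finset.sum_disjiUnion]
      have hstep : ∀ q ∈ Finset.HasAntidiagonal.antidiagonal n,
          (∑ g ∈ (Finset.map (addRightEmbedding fun t => if t = i then q.1 else 0)
              (s.piAntidiag q.2)), ∏ j ∈ Finset.cons i s hi, v j ^ g j)
          = v i ^ q.1 * HL q.2 (s.toList.map v) := by
        intro q _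
        rw [Finset.sum_map, ← ih q.2, Finset.mul_sum]
        refine Finset.sum_congr rfl fun g hg => ?_
        have hgi : g i = 0 := by
          rw [Finset.mem_piAntidiag] at hg
          by_contra h
          exact hi (hg.2 i h)
        rw [Finset.prod_cons]
        simp only [addRightEmbedding_apply, Pi.add_apply, hgi, if_true, zero_add]
        congr 1
        refine Finset.prod_congr rfl fun j hj => ?_
        rw [if_neg (by rintro rfl; exact hi hj), add_zero]
      rw [Finset.sum_congr rfl hstep, Finset.Nat.sum_antidiagonal_eq_sum_range_succ_mk]
      rw [HL_perm ((Finset.toList_cons hi).map v), List.map_cons, HL_cons]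

lemma Qc_eq (p n : ℕ) (hp : p.Prime) (hodd : Odd p) (K : Type*) [Field K] [CharP K p] :
    homogeneousComponent (p - 1) ((∏ i : Fin n, (X i + 1 : MvPolynomial (Fin n) K)) ^ (p - 1))
    = ∑ g ∈ (univ : Finset (Fin n)).piAntidiag (p - 1), ∏ i, X i ^ g i := by
  haveI := Fact.mk hp
  have hXpow : ∀ i : Fin n, ((X i + 1 : MvPolynomial (Fin n) K)) ^ (p - 1)
      = ∑ j ∈ range p, (-X i) ^ j := by
    intro i
    have hne : (X i + 1 : MvPolynomial (Fin n) K) ≠ 0 := fun h => by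
      have h2 := congrArg (eval (0 : Fin n → K)) h
      simp at h2
    apply mul_left_cancel₀ hne
    have h1 : (X i + 1 : MvPolynomial (Fin n) K) * (X i + 1) ^ (p - 1) = (X i + 1) ^ p := by
      conv_rhs => rw [(by have := hp.two_le; omega : p = (p - 1) + 1), pow_succ]
      ring
    rw [h1, add_pow_char, one_pow]
    have h2 := geom_sum_mul (-X i : MvPolynomial (Fin n) K) p
    have h3 : ((-X i : MvPolynomial (Fin n) K)) ^ p = -(X i ^ p) := hodd.neg_pow _
    rw [h3] at h2
    linear_combination h2
  rw [← Finset.prod_pow]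
  rw [Finset.prod_congr rfl fun i _ => hXpow i]
  rw [Finset.prod_univ_sum]
  rw [map_sum]
  have hterm : ∀ g ∈ Fintype.piFinset (fun _ : Fin n => range p),
      homogeneousComponent (p - 1) (∏ i, (-X i : MvPolynomial (Fin n) K) ^ g i)
      = if p - 1 = ∑ i, g i then ∏ i, (X i : MvPolynomial (Fin n) K) ^ g i else 0 := by
    intro g _
    have h4 : (∏ i, (-X i : MvPolynomial (Fin n) K) ^ g i)
        = ((-1 : K) ^ (∑ i, g i)) • ∏ i, (X i : MvPolynomial (Fin n) K) ^ g i := by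
      rw [smul_eq_C_mul, map_pow, map_neg, map_one]
      rw [← Finset.prod_pow_eq_pow_sum, ← Finset.prod_mul_distrib]
      exact Finset.prod_congr rfl fun i _ => by rw [neg_pow]
    rw [h4, map_smul]
    have hhom : (∏ i, (X i : MvPolynomial (Fin n) K) ^ g i).IsHomogeneous (∑ i, g i) := by
      have := MvPolynomial.IsHomogeneous.prod (univ : Finset (Fin n))
        (fun i => (X i : MvPolynomial (Fin n) K) ^ g i) (fun i => g i)
        (fun i _ => by simpa using (isHomogeneous_X K i).pow (g i))
      exact this
    rw [homogeneousComponent_of_mem ((mem_homogeneousSubmodule _ _).2 hhom)]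
    by_cases hc : p - 1 = ∑ i, g i
    · rw [if_pos hc, ← hc]
      have heven : Even (p - 1) := Nat.Odd.sub_odd hodd odd_one
      rw [heven.neg_one_pow, one_smul]
    · rw [if_neg hc, smul_zero]
  rw [Finset.sum_congr rfl hterm, ← Finset.sum_filter]
  refine Finset.sum_congr ?_ fun g _ => rfl
  ext g
  simp only [Finset.mem_filter, Fintype.mem_piFinset, Finset.mem_range, Finset.mem_piAntidiag]
  constructor
  · rintro ⟨-, h⟩
    exact ⟨h.symm, fun i _ => Finset.mem_univ i⟩
  · rintro ⟨h, -⟩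
    refine ⟨fun i => ?_, h.symm⟩
    have h5 : g i ≤ ∑ j, g j := Finset.single_le_sum (fun j _ => Nat.zero_le _) (Finset.mem_univ i)
    have h6 := hp.two_le
    have h7 : (∑ j, g j) = p - 1 := h
    omega

lemma four_mem {I : Ideal R} {f1 f2 f3 f4 : R} {e1 e2 e3 e4 M : ℕ}
    (h1 : f1 ∈ I ^ e1) (h2 : f2 ∈ I ^ e2) (h3 : f3 ∈ I ^ e3) (h4 : f4 ∈ I ^ e4)
    (h : M ≤ e1 + e2 + e3 + e4) : f1 * f2 * f3 * f4 ∈ I ^ M := by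
  have hm := Ideal.mul_mem_mul (Ideal.mul_mem_mul (Ideal.mul_mem_mul h1 h2) h3) h4
  rw [← pow_add, ← pow_add, ← pow_add] at hm
  exact Ideal.pow_le_pow_right h hm

lemma mem_pow_zero (I : Ideal R) (f : R) : f ∈ I ^ 0 := by
  rw [pow_zero, Ideal.one_eq_top]
  exact Submodule.mem_top

lemma mem_pow_one {I : Ideal R} {f : R} (h : f ∈ I) : f ∈ I ^ 1 := by rwa [pow_one]

end Stmt12Aux

open Stmt12Aux

/-- The homogeneous ideal of a point of projective space (given by a
representative `π`). -/
noncomputable def pointIdeal {K : Type} [Field K] {n : ℕ} (π : Fin n → K) :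
    Ideal (MvPolynomial (Fin n) K) :=
  Ideal.span {f | (∃ d, f.IsHomogeneous d) ∧ eval π f = 0}

lemma mem_pointIdeal {K : Type} [Field K] {n : ℕ} (π : Fin n → K)
    {f : MvPolynomial (Fin n) K} (d : ℕ) (hf : f.IsHomogeneous d) (h : eval π f = 0) :
    f ∈ pointIdeal π :=
  Ideal.subset_span ⟨⟨d, hf⟩, h⟩

lemma fermat_pow (p : ℕ) (hp : p.Prime) {K : Type} [Field K] [CharP K p] {a : K}
    (ha : a ∈ Set.range (Nat.cast : ℕ → K)) (h0 : a ≠ 0) : a ^ (p - 1) = 1 := by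
  haveI := Fact.mk hp
  obtain ⟨nn, rfl⟩ := ha
  have h1 : ((nn : K)) ^ p = (nn : K) := by
    have h2 : (ZMod.castHom (dvd_refl p) K) ((nn : ZMod p)) = ((nn : K)) := map_natCast _ nn
    calc ((nn : K)) ^ p = (ZMod.castHom (dvd_refl p) K) ((nn : ZMod p) ^ p) := by
          rw [map_pow, h2]
      _ = (ZMod.castHom (dvd_refl p) K) ((nn : ZMod p)) := by rw [ZMod.pow_card]
      _ = ((nn : K)) := h2
  have h3 : ((nn : K)) ^ (p - 1) * (nn : K) = 1 * (nn : K) := by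
    rw [one_mul, ← pow_succ, (by have := hp.two_le; omega : p - 1 + 1 = p), h1]
  exact mul_right_cancel₀ h0 h3

lemma Qs_mem (p n : ℕ) (hp : p.Prime) (hodd : Odd p) (K : Type) [Field K] [CharP K p]
    (π : Fin n → K) (P : Fin n → Prop) [DecidablePred P] (hP : ∀ i, P i ↔ π i ≠ 0)
    (hfermat : ∀ i, π i ≠ 0 → π i ^ (p - 1) = 1)
    (hk2 : 2 ≤ (Finset.univ.filter P).card) (hkp : (Finset.univ.filter P).card ≤ p) :
    (aeval (fun i : Fin n => (X i : MvPolynomial (Fin n) K) ^ (p - 1))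
      (homogeneousComponent (p - 1)
        ((∏ i : Fin n, (X i + 1 : MvPolynomial (Fin n) K)) ^ (p - 1))))
      ∈ (pointIdeal π) ^ (p - (Finset.univ.filter P).card + 1) := by
  set A := Finset.univ.filter P with hA
  set k := A.card with hk
  set I := pointIdeal π with hI
  set y : Fin n → MvPolynomial (Fin n) K := fun i => X i ^ (p - 1) with hy
  obtain ⟨j, hj⟩ : A.Nonempty := Finset.card_pos.mp (by omega)
  have hπj : π j ≠ 0 := (hP j).1 (Finset.mem_filter.1 hj).2
  -- rewrite Qs as an HL value
  have hQs : (aeval (fun i : Fin n => (X i : MvPolynomial (Fin n) K) ^ (p - 1))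
      (homogeneousComponent (p - 1)
        ((∏ i : Fin n, (X i + 1 : MvPolynomial (Fin n) K)) ^ (p - 1))))
      = ∑ g ∈ (Finset.univ : Finset (Fin n)).piAntidiag (p - 1), ∏ i, y i ^ g i := by
    rw [Qc_eq p n hp hodd K, map_sum]
    refine Finset.sum_congr rfl fun g _ => ?_
    rw [map_prod]
    exact Finset.prod_congr rfl fun i _ => by rw [map_pow, aeval_X]
  set B := Finset.univ.filter (fun i => ¬ P i) with hB
  have hperm : ((Finset.univ.toList : List (Fin n)).map y).Perm
      ((A.toList.map y) ++ (B.toList.map y)) := by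
    rw [← List.map_append]
    refine List.Perm.map y ?_
    rw [← Multiset.coe_eq_coe]
    have h2 : ((A.toList ++ B.toList : List (Fin n)) : Multiset (Fin n))
        = (↑A.toList + ↑B.toList : Multiset (Fin n)) := rfl
    rw [Finset.coe_toList, h2, Finset.coe_toList, Finset.coe_toList, hA, hB,
      Finset.filter_val, Finset.filter_val]
    exact (Multiset.filter_add_not P _).symm
  rw [hQs, bridge Finset.univ y (p - 1), HL_perm hperm]
  have hlen1 : (A.toList.map y).length = k := by rw [List.length_map, Finset.length_toList]
  have hmain := HK2 hp I (I ^ (p - 1)) (y j) (A.toList.map y) (B.toList.map y)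
    ?_ ?_ ?_ ?_
  · rw [hlen1] at hmain
    exact (sup_le le_rfl (Ideal.pow_le_pow_right (by omega)) :
      I ^ (p - k + 1) ⊔ I ^ (p - 1) ≤ I ^ (p - k + 1)) hmain
  · intro x hx
    obtain ⟨i, hi, rfl⟩ := List.mem_map.1 hx
    have hπi : π i ≠ 0 := (hP i).1 (Finset.mem_filter.1 (Finset.mem_toList.1 hi)).2
    refine mem_pointIdeal π (p - 1) ?_ ?_
    · exact (MvPolynomial.isHomogeneous_X_pow i (p - 1)).sub (MvPolynomial.isHomogeneous_X_pow j (p - 1))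
    · rw [map_sub, map_pow, map_pow, eval_X, eval_X, hfermat i hπi, hfermat j hπj, sub_self]
  · intro x hx
    obtain ⟨i, hi, rfl⟩ := List.mem_map.1 hx
    have hπi : π i = 0 := by
      have hni := (Finset.mem_filter.1 (Finset.mem_toList.1 hi)).2
      by_contra h
      exact hni ((hP i).2 h)
    exact Ideal.pow_mem_pow
      (mem_pointIdeal π 1 (isHomogeneous_X K i) (by rw [eval_X]; exact hπi)) _
  · rw [hlen1]
    exact hk2
  · rw [hlen1]
    exact hkp
theorem stmt12 (p N m : ℕ) (hp : p.Prime) (hodd : Odd p)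
    (hN : 2 * N = p + 1) (hm : 2 * m = p + 3)
    (K : Type) [Field K] [CharP K p] :
    -- the excluded point q = [1:0:⋯:0]
    let q : Fin (N + 1) → K := fun i => if i = 0 then 1 else 0
    let S : Set (Fin (N + 1) → K) :=
      {π | π ≠ 0 ∧ (∀ i, π i ∈ Set.range (Nat.cast : ℕ → K)) ∧
        ¬∃ c : K, π = c • q}
    -- Q_{p-1}, the degree-(p-1) homogeneous component of (∏(xᵢ+1))^{p-1}
    let Qc : MvPolynomial (Fin (N + 1)) K :=
      homogeneousComponent (p - 1) ((∏ i, (X i + 1)) ^ (p - 1))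
    -- Q_{p-1}(x₀^{p-1},…,x_N^{p-1})
    let Qs : MvPolynomial (Fin (N + 1)) K :=
      aeval (fun i : Fin (N + 1) => (X i : MvPolynomial (Fin (N + 1)) K) ^ (p - 1)) Qc
    let G : MvPolynomial (Fin (N + 1)) K :=
      X 0 * (X 0 ^ (p - 1) - X (Fin.last N) ^ (p - 1)) *
        ((N : MvPolynomial (Fin (N + 1)) K) * X 0 ^ (p - 1) +
          ∑ i ∈ Finset.Ioo (0 : Fin (N + 1)) (Fin.last N), X i ^ (p - 1)) * Qs
    G.totalDegree = p ^ 2 ∧ eval q G ≠ 0 ∧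
      G ∈ ⨅ π ∈ S, (pointIdeal π) ^ m := by
  intro q S Qc Qs G
  classical
  have hp2 := hp.two_le
  have hpodd := Nat.odd_iff.mp hodd
  have hp3 : 3 ≤ p := by omega
  have hN2 : 2 ≤ N := by omega
  have hNp : N + 1 ≤ p := by omega
  have hNlast : (Fin.last N) ≠ (0 : Fin (N + 1)) := by
    intro h
    have hv := congrArg Fin.val h
    rw [Fin.val_last, Fin.val_zero] at hv
    omega
  have hq : ∀ i, q i = if i = 0 then 1 else 0 := fun i => rfl
  have hqpow : ∀ i : Fin (N + 1), (q i) ^ (p - 1) = if i = 0 then (1 : K) else 0 := by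
    intro i
    rw [hq]
    by_cases h : i = 0
    · rw [if_pos h, one_pow]
    · rw [if_neg h, zero_pow (by omega : p - 1 ≠ 0)]
  have hQc : Qc = ∑ g ∈ (Finset.univ : Finset (Fin (N + 1))).piAntidiag (p - 1),
      ∏ i, (X i : MvPolynomial (Fin (N + 1)) K) ^ g i := Qc_eq p (N + 1) hp hodd K
  have hQs : Qs = ∑ g ∈ (Finset.univ : Finset (Fin (N + 1))).piAntidiag (p - 1),
      ∏ i, ((X i : MvPolynomial (Fin (N + 1)) K) ^ (p - 1)) ^ g i := by
    show aeval _ Qc = _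
    rw [hQc, map_sum]
    refine Finset.sum_congr rfl fun g _ => ?_
    rw [map_prod]
    exact Finset.prod_congr rfl fun i _ => by rw [map_pow, aeval_X]
  have hGdef : G = X 0 * (X 0 ^ (p - 1) - X (Fin.last N) ^ (p - 1)) *
      ((N : MvPolynomial (Fin (N + 1)) K) * X 0 ^ (p - 1) +
        ∑ i ∈ Finset.Ioo (0 : Fin (N + 1)) (Fin.last N), X i ^ (p - 1)) * Qs := rfl
  -- evaluation of Qs at q
  have hevalQs : eval q Qs = 1 := by
    rw [hQs, map_sum]
    have hterm : ∀ g ∈ (Finset.univ : Finset (Fin (N + 1))).piAntidiag (p - 1),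
        eval q (∏ i, ((X i : MvPolynomial (Fin (N + 1)) K) ^ (p - 1)) ^ g i)
          = ∏ i, ((q i) ^ (p - 1)) ^ g i := by
      intro g _
      rw [map_prod]
      exact Finset.prod_congr rfl fun i _ => by rw [map_pow, map_pow, eval_X]
    rw [Finset.sum_congr rfl hterm]
    rw [Finset.sum_eq_single (fun i : Fin (N + 1) => if i = 0 then p - 1 else 0)]
    · refine Finset.prod_eq_one fun i _ => ?_
      show (q i ^ (p - 1)) ^ (if i = 0 then p - 1 else 0) = 1
      by_cases h : i = 0
      · rw [if_pos h, hqpow, if_pos h, one_pow]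
      · rw [if_neg h, pow_zero]
    · intro g hg hne
      have hexists : ∃ i, i ≠ 0 ∧ g i ≠ 0 := by
        by_contra hno
        push_neg at hno
        apply hne
        funext i
        show g i = if i = 0 then p - 1 else 0
        by_cases h : i = 0
        · subst h
          rw [if_pos rfl]
          have hsum : ∑ j, g j = p - 1 := (Finset.mem_piAntidiag.1 hg).1
          rw [← hsum]
          exact (Finset.sum_eq_single 0 (fun j _ hj => hno j hj)
            (fun h => absurd (Finset.mem_univ 0) h)).symm
        · rw [if_neg h]
          exact hno i h
      obtain ⟨i, hi0, hgi⟩ := hexists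
      refine Finset.prod_eq_zero (Finset.mem_univ i) ?_
      rw [hqpow, if_neg hi0, zero_pow hgi]
    · intro habs
      exfalso
      apply habs
      rw [Finset.mem_piAntidiag]
      refine ⟨?_, fun i _ => Finset.mem_univ i⟩
      rw [Finset.sum_ite_eq' Finset.univ (0 : Fin (N + 1)) (fun _ => p - 1)]
      rw [if_pos (Finset.mem_univ 0)]
  have hNK : (N : K) ≠ 0 := by
    intro h
    have h1 : ((2 * N : ℕ) : K) = 0 := by push_cast; rw [h]; ring
    rw [hN] at h1
    push_cast at h1
    rw [CharP.cast_eq_zero K p] at h1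
    simp at h1
  have he1 : eval q (X 0 : MvPolynomial (Fin (N + 1)) K) = 1 := by
    rw [eval_X, hq, if_pos rfl]
  have he2 : eval q (X 0 ^ (p - 1) - X (Fin.last N) ^ (p - 1)
      : MvPolynomial (Fin (N + 1)) K) = 1 := by
    rw [map_sub, map_pow, map_pow, eval_X, eval_X, hqpow, hqpow, if_pos rfl,
      if_neg hNlast, sub_zero]
  have he3 : eval q ((N : MvPolynomial (Fin (N + 1)) K) * X 0 ^ (p - 1) +
      ∑ i ∈ Finset.Ioo (0 : Fin (N + 1)) (Fin.last N), X i ^ (p - 1)) = (N : K) := by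
    rw [map_add, map_mul, map_pow, eval_X, map_natCast, hqpow, if_pos rfl, mul_one, map_sum]
    rw [Finset.sum_eq_zero, add_zero]
    intro i hi
    have hi0 : i ≠ 0 := by
      have := (Finset.mem_Ioo.1 hi).1
      intro h
      rw [h] at this
      exact lt_irrefl _ this
    rw [map_pow, eval_X, hqpow, if_neg hi0]
  have hevalG : eval q G = (N : K) := by
    rw [hGdef, map_mul, map_mul, map_mul, he1, he2, he3, hevalQs]
    ring
  have hGne : G ≠ 0 := by
    intro h
    apply hNK
    rw [← hevalG, h, map_zero]
  have hhomQs : Qs.IsHomogeneous ((p - 1) * (p - 1)) := by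
    rw [hQs, ← mem_homogeneousSubmodule]
    refine Submodule.sum_mem _ fun g hg => ?_
    rw [mem_homogeneousSubmodule]
    have hsum : ∑ i, g i = p - 1 := (Finset.mem_piAntidiag.1 hg).1
    have hpr := MvPolynomial.IsHomogeneous.prod (Finset.univ : Finset (Fin (N + 1)))
      (fun i => ((X i : MvPolynomial (Fin (N + 1)) K) ^ (p - 1)) ^ g i)
      (fun i => (p - 1) * g i)
      (fun i _ => by
        show ((X i ^ (p - 1)) ^ g i).IsHomogeneous ((p - 1) * g i)
        rw [← pow_mul]
        exact MvPolynomial.isHomogeneous_X_pow i _)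
    rw [← Finset.mul_sum, hsum] at hpr
    exact hpr
  have hhomCf : (((N : MvPolynomial (Fin (N + 1)) K) * X 0 ^ (p - 1) +
      ∑ i ∈ Finset.Ioo (0 : Fin (N + 1)) (Fin.last N), X i ^ (p - 1))).IsHomogeneous (p - 1) := by
    refine MvPolynomial.IsHomogeneous.add ?_ ?_
    · have hC : ((N : ℕ) : MvPolynomial (Fin (N + 1)) K) = C ((N : ℕ) : K) :=
        (map_natCast (C : K →+* MvPolynomial (Fin (N + 1)) K) N).symm
      rw [hC]
      simpa using (isHomogeneous_C (Fin (N + 1)) ((N : ℕ) : K)).mul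
        (MvPolynomial.isHomogeneous_X_pow 0 (p - 1))
    · rw [← mem_homogeneousSubmodule]
      exact Submodule.sum_mem _ fun i _ =>
        (mem_homogeneousSubmodule _ _).2 (MvPolynomial.isHomogeneous_X_pow i (p - 1))
  have hhomG : G.IsHomogeneous (p ^ 2) := by
    have hmul := (((isHomogeneous_X K (0 : Fin (N + 1))).mul
        ((MvPolynomial.isHomogeneous_X_pow (0 : Fin (N + 1)) (p - 1)).sub
          (MvPolynomial.isHomogeneous_X_pow (Fin.last N) (p - 1)))).mul hhomCf).mul hhomQs
    have harith : 1 + (p - 1) + (p - 1) + (p - 1) * (p - 1) = p ^ 2 := by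
      obtain ⟨d, rfl⟩ : ∃ d, p = d + 1 := ⟨p - 1, by omega⟩
      simp only [Nat.add_sub_cancel]
      ring
    rw [hGdef]
    exact harith ▸ hmul
  refine ⟨hhomG.totalDegree hGne, by rw [hevalG]; exact hNK, ?_⟩
  refine (Submodule.mem_iInf _).2 fun π => (Submodule.mem_iInf _).2 fun hπS => ?_
  obtain ⟨hπ0, hπF, hπq⟩ := hπS
  have hfermat : ∀ i, π i ≠ 0 → π i ^ (p - 1) = 1 := fun i h => fermat_pow p hp (hπF i) h
  set k := (Finset.univ.filter (fun i : Fin (N + 1) => π i ≠ 0)).card with hkdef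
  have hmemSf : ∀ i, i ∈ (Finset.univ.filter (fun i : Fin (N + 1) => π i ≠ 0)) ↔ π i ≠ 0 := by
    intro i
    rw [Finset.mem_filter]
    simp
  have hkN1 : k ≤ N + 1 := by
    rw [hkdef]
    have h1 := Finset.card_filter_le (Finset.univ : Finset (Fin (N + 1)))
      (fun i : Fin (N + 1) => π i ≠ 0)
    rwa [Finset.card_univ, Fintype.card_fin] at h1
  have hkp : k ≤ p := by omega
  have hXmem : ∀ i : Fin (N + 1), π i = 0 →
      (X i : MvPolynomial (Fin (N + 1)) K) ∈ pointIdeal π := fun i h =>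
    mem_pointIdeal π 1 (isHomogeneous_X K i) (by rw [eval_X]; exact h)
  have hXpmem : ∀ i : Fin (N + 1), π i = 0 →
      ((X i : MvPolynomial (Fin (N + 1)) K) ^ (p - 1)) ∈ (pointIdeal π) ^ (p - 1) :=
    fun i h => Ideal.pow_mem_pow (hXmem i h) _
  have hQsmem' := Qs_mem p (N + 1) hp hodd K π (fun i => π i ≠ 0) (fun i => Iff.rfl) hfermat
  rw [← hkdef] at hQsmem'
  have hcard_le_of_zero : ∀ i : Fin (N + 1), π i = 0 → k ≤ N := by
    intro i h
    have hsub : (Finset.univ.filter (fun j : Fin (N + 1) => π j ≠ 0)) ⊆ Finset.univ.erase i := by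
      intro x hx
      exact Finset.mem_erase.2 ⟨fun he => ((hmemSf x).1 hx) (he ▸ h), Finset.mem_univ x⟩
    have h2 := Finset.card_le_card hsub
    rw [Finset.card_erase_of_mem (Finset.mem_univ i), Finset.card_univ, Fintype.card_fin] at h2
    omega
  have hcard2 : ∀ i i' : Fin (N + 1), i ≠ i' → π i = 0 → π i' = 0 → k ≤ N - 1 := by
    intro i i' hne h h'
    have hsub : (Finset.univ.filter (fun j : Fin (N + 1) => π j ≠ 0))
        ⊆ (Finset.univ.erase i).erase i' := by
      intro x hx
      refine Finset.mem_erase.2 ⟨fun he => ((hmemSf x).1 hx) (he ▸ h'), ?_⟩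
      exact Finset.mem_erase.2 ⟨fun he => ((hmemSf x).1 hx) (he ▸ h), Finset.mem_univ x⟩
    have h2 := Finset.card_le_card hsub
    rw [Finset.card_erase_of_mem
        (Finset.mem_erase.2 ⟨Ne.symm hne, Finset.mem_univ i'⟩),
      Finset.card_erase_of_mem (Finset.mem_univ i), Finset.card_univ, Fintype.card_fin] at h2
    omega
  have hk2of : ∀ i i' : Fin (N + 1), i ≠ i' → π i ≠ 0 → π i' ≠ 0 → 2 ≤ k := by
    intro i i' hne h h'
    exact Finset.one_lt_card.2 ⟨i, (hmemSf i).2 h, i', (hmemSf i').2 h', hne⟩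
  have hIoomem : ∀ i : Fin (N + 1),
      i ∈ Finset.Ioo (0 : Fin (N + 1)) (Fin.last N) ↔ (i ≠ 0 ∧ i ≠ Fin.last N) := by
    intro i
    rw [Finset.mem_Ioo]
    constructor
    · rintro ⟨h1, h2⟩
      exact ⟨Fin.pos_iff_ne_zero.1 h1, ne_of_lt h2⟩
    · rintro ⟨h1, h2⟩
      exact ⟨Fin.pos_iff_ne_zero.2 h1, lt_of_le_of_ne (Fin.le_last i) h2⟩
  have honemem : (⟨1, by omega⟩ : Fin (N + 1)) ∈ Finset.Ioo (0 : Fin (N + 1)) (Fin.last N) := by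
    rw [Finset.mem_Ioo]
    constructor
    · rw [Fin.lt_def]
      exact Nat.zero_lt_one
    · rw [Fin.lt_def, Fin.val_last]
      show (1 : ℕ) < N
      omega
  have honene : (0 : Fin (N + 1)) ≠ (⟨1, by omega⟩ : Fin (N + 1)) := by
    intro h
    have hv := congrArg Fin.val h
    simp at hv
  have hq_of : π 0 ≠ 0 → π (Fin.last N) = 0 →
      (∀ i ∈ Finset.Ioo (0 : Fin (N + 1)) (Fin.last N), π i = 0) → False := by
    intro h0 hl hmid
    apply hπq
    refine ⟨π 0, ?_⟩
    funext i
    rw [Pi.smul_apply, hq i, smul_eq_mul]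
    by_cases h : i = 0
    · rw [if_pos h, mul_one, h]
    · rw [if_neg h, mul_zero]
      by_cases h' : i = Fin.last N
      · rw [h']; exact hl
      · exact hmid i ((hIoomem i).2 ⟨h, h'⟩)
  have hF1both : π 0 ≠ 0 → π (Fin.last N) ≠ 0 →
      ((X 0 : MvPolynomial (Fin (N + 1)) K) ^ (p - 1) - X (Fin.last N) ^ (p - 1))
        ∈ pointIdeal π := by
    intro h0 hl
    refine mem_pointIdeal π (p - 1)
      ((MvPolynomial.isHomogeneous_X_pow 0 (p - 1)).sub
        (MvPolynomial.isHomogeneous_X_pow (Fin.last N) (p - 1))) ?_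
    rw [map_sub, map_pow, map_pow, eval_X, eval_X, hfermat 0 h0, hfermat _ hl, sub_self]
  have hF1zz : π 0 = 0 → π (Fin.last N) = 0 →
      ((X 0 : MvPolynomial (Fin (N + 1)) K) ^ (p - 1) - X (Fin.last N) ^ (p - 1))
        ∈ (pointIdeal π) ^ (p - 1) := by
    intro h0 hl
    exact sub_mem (hXpmem 0 h0) (hXpmem _ hl)
  have hCfhi : π 0 ≠ 0 → (∀ i ∈ Finset.Ioo (0 : Fin (N + 1)) (Fin.last N), π i ≠ 0) →
      ((N : MvPolynomial (Fin (N + 1)) K) * X 0 ^ (p - 1) +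
        ∑ i ∈ Finset.Ioo (0 : Fin (N + 1)) (Fin.last N), X i ^ (p - 1)) ∈ pointIdeal π := by
    intro h0 hmid
    refine mem_pointIdeal π (p - 1) hhomCf ?_
    rw [map_add, map_mul, map_pow, eval_X, map_natCast, hfermat 0 h0, mul_one, map_sum]
    have hsum : ∑ i ∈ Finset.Ioo (0 : Fin (N + 1)) (Fin.last N),
        eval π ((X i : MvPolynomial (Fin (N + 1)) K) ^ (p - 1))
        = ((N - 1 : ℕ) : K) := by
      rw [Finset.sum_congr rfl (fun i hi => by
        rw [map_pow, eval_X, hfermat i (hmid i hi)])]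
      rw [Finset.sum_const, nsmul_eq_mul, mul_one]
      congr 1
      rw [Fin.card_Ioo, Fin.val_last, Fin.val_zero]
      omega
    rw [hsum, ← Nat.cast_add, (by omega : N + (N - 1) = p), CharP.cast_eq_zero]
  have hCflow : π 0 = 0 → (∀ i ∈ Finset.Ioo (0 : Fin (N + 1)) (Fin.last N), π i = 0) →
      ((N : MvPolynomial (Fin (N + 1)) K) * X 0 ^ (p - 1) +
        ∑ i ∈ Finset.Ioo (0 : Fin (N + 1)) (Fin.last N), X i ^ (p - 1))
        ∈ (pointIdeal π) ^ (p - 1) := by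
    intro h0 hmid
    refine add_mem (Ideal.mul_mem_left _ _ (hXpmem 0 h0)) ?_
    exact Ideal.sum_mem _ fun i hi => hXpmem i (hmid i hi)
  rw [hGdef]
  by_cases h0 : π 0 = 0
  · by_cases hl : π (Fin.last N) = 0
    · exact four_mem (mem_pow_one (hXmem 0 h0)) (hF1zz h0 hl) (mem_pow_zero _ _)
        (mem_pow_zero _ _) (by omega)
    · by_cases hmid : ∀ i ∈ Finset.Ioo (0 : Fin (N + 1)) (Fin.last N), π i = 0
      · exact four_mem (mem_pow_one (hXmem 0 h0)) (mem_pow_zero _ _) (hCflow h0 hmid)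
          (mem_pow_zero _ _) (by omega)
      · push_neg at hmid
        obtain ⟨i₁, hi₁m, hi₁⟩ := hmid
        have hk2 : 2 ≤ k := hk2of i₁ (Fin.last N) ((hIoomem i₁).1 hi₁m).2 hi₁ hl
        have hkN : k ≤ N := hcard_le_of_zero 0 h0
        exact four_mem (mem_pow_one (hXmem 0 h0)) (mem_pow_zero _ _) (mem_pow_zero _ _)
          (hQsmem' hk2 hkp) (by omega)
  · by_cases hl : π (Fin.last N) = 0
    · by_cases hmidall : ∀ i ∈ Finset.Ioo (0 : Fin (N + 1)) (Fin.last N), π i ≠ 0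
      · have hone' : π ⟨1, by omega⟩ ≠ 0 := hmidall _ honemem
        have hk2 : 2 ≤ k := hk2of 0 ⟨1, by omega⟩ honene h0 hone'
        have hkN : k ≤ N := hcard_le_of_zero (Fin.last N) hl
        exact four_mem (mem_pow_zero _ _) (mem_pow_zero _ _)
          (mem_pow_one (hCfhi h0 hmidall)) (hQsmem' hk2 hkp) (by omega)
      · push_neg at hmidall
        obtain ⟨i₀, hi₀m, hi₀⟩ := hmidall
        by_cases hmid2 : ∀ i ∈ Finset.Ioo (0 : Fin (N + 1)) (Fin.last N), π i = 0
        · exact (hq_of h0 hl hmid2).elim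
        · push_neg at hmid2
          obtain ⟨i₁, hi₁m, hi₁⟩ := hmid2
          have hk2 : 2 ≤ k := hk2of 0 i₁ (Ne.symm ((hIoomem i₁).1 hi₁m).1) h0 hi₁
          have hkN1' : k ≤ N - 1 := hcard2 i₀ (Fin.last N) ((hIoomem i₀).1 hi₀m).2 hi₀ hl
          exact four_mem (mem_pow_zero _ _) (mem_pow_zero _ _) (mem_pow_zero _ _)
            (hQsmem' hk2 hkp) (by omega)
    · have hk2 : 2 ≤ k := hk2of 0 (Fin.last N) (Ne.symm hNlast) h0 hl
      by_cases hmidall : ∀ i ∈ Finset.Ioo (0 : Fin (N + 1)) (Fin.last N), π i ≠ 0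
      · exact four_mem (mem_pow_zero _ _) (mem_pow_one (hF1both h0 hl))
          (mem_pow_one (hCfhi h0 hmidall)) (hQsmem' hk2 hkp) (by omega)
      · push_neg at hmidall
        obtain ⟨i₀, hi₀m, hi₀⟩ := hmidall
        have hkN : k ≤ N := hcard_le_of_zero i₀ hi₀
        exact four_mem (mem_pow_zero _ _) (mem_pow_one (hF1both h0 hl)) (mem_pow_zero _ _)
          (hQsmem' hk2 hkp) (by omega)
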